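/- For each pair of nonnegative integers i, m there exists a constant B_{i,m} such that 2F~_i^m(x,y) ≡ B_{i,m}·(x+m+i)_{3m+2i+1}·(x−1/2)_m ≡ −B_{i,m}·(y+m+i)_{3m+2i+1}·(y−1/2)_m modulo the ideal generated by (x+y−m) in ℚ[x,y]. -/

import Mathlib

open MvPolynomial

/-- Falling factorial `(a)_k = a(a-1)⋯(a-k+1)`. -/
noncomputable def ff {R : Type*} [CommRing R] (a : R) (k : ℕ) : R :=
  ∏ j ∈ Finset.range k, (a - (j : R))

/-- Rising factorial in `ℚ`. -/
noncomputable def rr (a : ℚ) (k : ℕ) : ℚ :=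
  ∏ j ∈ Finset.range k, (a + (j : ℚ))

section ffLemmas
variable {R : Type*} [CommRing R] (a : R)

lemma ff_zero : ff a 0 = 1 := by simp [ff]

lemma ff_succ (n : ℕ) : ff a (n + 1) = ff a n * (a - n) := by
  simp [ff, Finset.prod_range_succ]

lemma ff_succ' (n : ℕ) : ff a (n + 1) = a * ff (a - 1) n := by
  rw [ff, Finset.prod_range_succ']
  simp only [Nat.cast_zero, sub_zero, ff]
  rw [mul_comm]
  congr 1
  apply Finset.prod_congr rfl
  intro j _
  push_cast
  ring

lemma ff_add (p q : ℕ) : ff a (p + q) = ff a p * ff (a - p) q := by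
  rw [ff, Finset.prod_range_add]
  congr 1
  apply Finset.prod_congr rfl
  intro j _
  push_cast
  ring

lemma ff_reflect (n : ℕ) : ff a n = (-1) ^ n * ff ((n : R) - 1 - a) n := by
  induction n generalizing a with
  | zero => simp [ff]
  | succ n ih =>
    rw [ff_succ, ih]
    have h1 : ((n+1 : ℕ) : R) - 1 - a = (n : R) - a := by push_cast; ring
    rw [h1, ff_succ']
    have h2 : (n : R) - a - 1 = (n : R) - 1 - a := by ring
    rw [h2]
    ring

lemma ff_map {S : Type*} [CommRing S] {F : Type*} [FunLike F R S] [RingHomClass F R S]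
    (f : F) (n : ℕ) : f (ff a n) = ff (f a) n := by
  simp [ff, map_prod]

end ffLemmas

lemma ff_natCast_eq_zero {k m : ℕ} (hk : k < m) : ff (k : ℚ) m = 0 := by
  apply Finset.prod_eq_zero (Finset.mem_range.2 hk)
  simp

section rrLemmas

lemma rr_zero (a : ℚ) : rr a 0 = 1 := by simp [rr]

lemma rr_one (a : ℚ) : rr a 1 = a := by simp [rr]

lemma rr_succ (a : ℚ) (n : ℕ) : rr a (n + 1) = rr a n * (a + n) := by
  simp [rr, Finset.prod_range_succ]

lemma rr_succ' (a : ℚ) (n : ℕ) : rr a (n + 1) = a * rr (a + 1) n := by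
  rw [rr, Finset.prod_range_succ']
  simp only [Nat.cast_zero, add_zero, rr]
  rw [mul_comm]
  congr 1
  apply Finset.prod_congr rfl
  intro j _
  push_cast
  ring

lemma rr_add (a : ℚ) (p q : ℕ) : rr a (p + q) = rr a p * rr (a + p) q := by
  rw [rr, Finset.prod_range_add]
  congr 1
  apply Finset.prod_congr rfl
  intro j _
  push_cast
  ring

lemma rr_pos {a : ℚ} (ha : 0 < a) (n : ℕ) : 0 < rr a n := by
  induction n with
  | zero => simp [rr]
  | succ n ih => rw [rr_succ]; positivity

lemma ff_eq_rr (a : ℚ) (n : ℕ) : ff a n = rr (a - n + 1) n := by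
  induction n generalizing a with
  | zero => simp [ff, rr]
  | succ n ih =>
    rw [ff_succ, ih]
    have h1 : a - ((n+1:ℕ) : ℚ) + 1 = a - n := by push_cast; ring
    rw [h1, rr_succ']
    have h2 : a - (n:ℚ) + 1 = a - n + 1 := by ring
    ring

lemma rr_neg_natCast_eq_zero {k m : ℕ} (hk : k < m) : rr (-(k : ℚ)) m = 0 := by
  apply Finset.prod_eq_zero (Finset.mem_range.2 hk)
  simp

end rrLemmas

section PS
/-- Summand of the (denominator-free) Pfaff–Saalschütz sum. -/
noncomputable def psT (m : ℕ) (b c d : ℚ) (u : ℕ) : ℚ :=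
  (-1) ^ u * (m.choose u : ℚ) * rr b u * rr c u * rr (d + u) (m - u) *
    rr (1 + b + c - d - m + u) (m - u)

/-- Telescoping certificate for the Pfaff–Saalschütz recurrence. -/
noncomputable def psG (m : ℕ) (b c d : ℚ) (u : ℕ) : ℚ :=
  (-1) ^ (u + 1) * ((m + 1).choose u : ℚ) * rr b u * rr c u * rr (d + u) (m - u) *
    rr (1 + b + c - d - m + u) (m - u) *
    ((u : ℚ) * ((u : ℚ) ^ 2 + (b + c - m - 1) * u + (d - 1) * (b + c - d - m)) / (m + 1))

lemma psG_zero (m : ℕ) (b c d : ℚ) : psG m b c d 0 = 0 := by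
  simp [psG]

lemma psG_step (m : ℕ) (b c d : ℚ) (u : ℕ) (hu : u < m) :
    psG m b c d (u + 1) - psG m b c d u =
      psT (m + 1) b c d u + ((d - b + m) * (d - c + m)) * psT m b c d u := by
  have hum : (u : ℚ) < (m : ℚ) := by exact_mod_cast hu
  have hmu : ((m : ℚ) + 1 - u) ≠ 0 := by intro h; nlinarith
  have hm1 : ((m : ℚ) + 1) ≠ 0 := by positivity
  have hu1 : ((u : ℚ) + 1) ≠ 0 := by positivity
  have hc1 : ((m + 1).choose (u + 1) : ℚ) = ((m:ℚ) + 1) * (m.choose u : ℚ) / ((u:ℚ) + 1) := by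
    have h := Nat.add_one_mul_choose_eq m u
    have h2 : (((m+1) * m.choose u : ℕ) : ℚ) = (((m + 1).choose (u + 1) * (u + 1) : ℕ) : ℚ) := by
      exact_mod_cast congrArg (Nat.cast : ℕ → ℚ) h
    push_cast at h2
    field_simp
    linarith [h2]
  have hc2 : ((m + 1).choose u : ℚ) = ((m:ℚ) + 1) * (m.choose u : ℚ) / ((m:ℚ) + 1 - u) := by
    have h := Nat.choose_mul_succ_eq m u
    have h2 : ((m.choose u * (m + 1) : ℕ) : ℚ) = (((m + 1).choose u * (m + 1 - u) : ℕ) : ℚ) := by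
      exact_mod_cast congrArg (Nat.cast : ℕ → ℚ) h
    have hle : u ≤ m + 1 := by omega
    rw [Nat.cast_mul, Nat.cast_mul, Nat.cast_sub hle] at h2
    push_cast at h2
    field_simp
    linarith [h2]
  have hsub1 : m - (u + 1) = m - u - 1 := by omega
  have hsub2 : m - u = (m - u - 1) + 1 := by omega
  have hsub3 : m + 1 - u = (m - u - 1) + 1 + 1 := by omega
  have hcast : ((m - u - 1 : ℕ) : ℚ) = (m : ℚ) - u - 1 := by
    have : (m - u - 1) + (u + 1) = m := by omega
    have h := congrArg (Nat.cast : ℕ → ℚ) this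
    push_cast at h
    linarith
  have hra : rr b (u + 1) = rr b u * (b + u) := rr_succ b u
  have hrb : rr c (u + 1) = rr c u * (c + u) := rr_succ c u
  have hd1 : rr (d + ((u:ℕ) + 1 : ℕ)) (m - u - 1) = rr (d + u + 1) (m - u - 1) := by
    push_cast; ring_nf
  have he1 : rr (1 + b + c - d - m + ((u:ℕ) + 1 : ℕ)) (m - u - 1)
      = rr (1 + b + c - d - m + u + 1) (m - u - 1) := by
    push_cast; ring_nf
  have hd2 : rr (d + u) (m - u) = (d + u) * rr (d + u + 1) (m - u - 1) := by
    rw [hsub2, rr_succ']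
    norm_num
  have he2 : rr (1 + b + c - d - m + u) (m - u)
      = (1 + b + c - d - m + u) * rr (1 + b + c - d - m + u + 1) (m - u - 1) := by
    rw [hsub2, rr_succ']
    norm_num
  have hd3 : rr (d + u) (m + 1 - u)
      = (d + u) * rr (d + u + 1) (m - u - 1) * (d + m) := by
    rw [hsub3, rr_succ, rr_succ', hsub2.symm]
    have hcast2 : ((m - u : ℕ) : ℚ) = (m : ℚ) - u := by
      rw [Nat.cast_sub (le_of_lt hu)]
    rw [hcast2]
    ring
  have he3 : rr (1 + b + c - d - ((m:ℕ) + 1 : ℕ) + u) (m + 1 - u)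
      = (1 + b + c - d - m + u - 1) * (1 + b + c - d - m + u) *
        rr (1 + b + c - d - m + u + 1) (m - u - 1) := by
    have harg : (1 : ℚ) + b + c - d - ((m:ℕ) + 1 : ℕ) + u = (1 + b + c - d - m + u) - 1 := by
      push_cast; ring
    rw [hsub3, harg, rr_succ', rr_succ']
    have h5 : (1 : ℚ) + b + c - d - ↑m + ↑u - 1 + 1 = 1 + b + c - d - ↑m + ↑u := by ring
    rw [h5]
    ring
  simp only [psG, psT, hsub1]
  rw [hra, hrb, hd1, he1, hd2, he2, hd3, he3, hc1, hc2]
  push_cast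
  field_simp
  ring

end PS

section PS2

lemma psG_last (m : ℕ) (b c d : ℚ) :
    psT (m+1) b c d m + psT (m+1) b c d (m+1)
      + ((d - b + m) * (d - c + m)) * psT m b c d m = - psG m b c d m := by
  have hm1 : ((m : ℚ) + 1) ≠ 0 := by positivity
  have h1 : (m + 1) - m = 1 := by omega
  have h2 : (m + 1) - (m + 1) = 0 := by omega
  have h3 : m - m = 0 := by omega
  simp only [psT, psG, h1, h2, h3, rr_one, rr_zero, Nat.choose_succ_self_right,
    Nat.choose_self, rr_succ, pow_succ]
  push_cast
  field_simp
  ring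

theorem psSum (m : ℕ) (b c d : ℚ) :
    ∑ u ∈ Finset.range (m+1), psT m b c d u = (-1)^m * rr (d-b) m * rr (d-c) m := by
  induction m generalizing b c d with
  | zero => simp [psT, rr_zero]
  | succ m ih =>
    have tele : ∑ u ∈ Finset.range m, (psG m b c d (u+1) - psG m b c d u)
        = psG m b c d m - psG m b c d 0 := Finset.sum_range_sub (psG m b c d) m
    have hstep : ∑ u ∈ Finset.range m, (psG m b c d (u+1) - psG m b c d u)
        = ∑ u ∈ Finset.range m,
            (psT (m+1) b c d u + ((d - b + m) * (d - c + m)) * psT m b c d u) := by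
      apply Finset.sum_congr rfl
      intro u hu
      exact psG_step m b c d u (Finset.mem_range.1 hu)
    have hsplit1 : ∑ u ∈ Finset.range (m+1+1), psT (m+1) b c d u
        = ∑ u ∈ Finset.range m, psT (m+1) b c d u + psT (m+1) b c d m
          + psT (m+1) b c d (m+1) := by
      rw [Finset.sum_range_succ, Finset.sum_range_succ]
    have hsplit2 : ∑ u ∈ Finset.range (m+1), psT m b c d u
        = ∑ u ∈ Finset.range m, psT m b c d u + psT m b c d m :=
      Finset.sum_range_succ _ m
    have hsum : ∑ u ∈ Finset.range m,
            (psT (m+1) b c d u + ((d - b + m) * (d - c + m)) * psT m b c d u)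
        = ∑ u ∈ Finset.range m, psT (m+1) b c d u
          + ((d - b + m) * (d - c + m)) * ∑ u ∈ Finset.range m, psT m b c d u := by
      rw [Finset.sum_add_distrib, Finset.mul_sum]
    have hlast := psG_last m b c d
    have hzero := psG_zero m b c d
    have hih := ih b c d
    have key : ∑ u ∈ Finset.range (m+1+1), psT (m+1) b c d u
        = -((d - b + m) * (d - c + m)) * ((-1)^m * rr (d-b) m * rr (d-c) m) := by
      rw [hsplit1]
      have e1 : ∑ u ∈ Finset.range m, psT (m+1) b c d u
          = psG m b c d m - psG m b c d 0
            - ((d - b + m) * (d - c + m)) * ∑ u ∈ Finset.range m, psT m b c d u := by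
        rw [← tele, hstep, hsum]; ring
      rw [e1, hzero]
      have e2 : ∑ u ∈ Finset.range m, psT m b c d u
          = (-1)^m * rr (d-b) m * rr (d-c) m - psT m b c d m := by
        rw [← hih, hsplit2]; ring
      rw [e2]
      linarith [hlast]
    rw [key, rr_succ (d-b) m, rr_succ (d-c) m, pow_succ]
    push_cast
    ring
end PS2

lemma keyVanish (i m k : ℕ) (hk : k < m) :
    ∑ u ∈ Finset.range (m+1),
      ((m.choose u : ℚ) * (-1)^u * (m.factorial : ℚ) / ff ((m:ℚ) + i + u + 1/2) (m+1))
        * (ff (((k:ℚ)+1/2) + ((m:ℚ) + i + u)) u * ff (((k:ℚ)+1/2) + (i:ℚ)) (m-u)) = 0 := by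
  set a : ℚ := (i:ℚ) + 1/2 with ha
  set K : ℚ := (k:ℚ) with hK
  have hapos : 0 < a := by positivity
  have hterm : ∀ u ∈ Finset.range (m+1),
      ((m.choose u : ℚ) * (-1)^u * (m.factorial : ℚ) / ff ((m:ℚ) + i + u + 1/2) (m+1))
        * (ff ((K+1/2) + ((m:ℚ) + i + u)) u * ff ((K+1/2) + (i:ℚ)) (m-u))
      = ((m.factorial : ℚ) / rr a (2*m+1))
          * psT m a (a + m + K + 1) (a + m + 1) u := by
    intro u hu
    have hum : u ≤ m := by
      have := Finset.mem_range.1 hu; omega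
    have hden : ff ((m:ℚ) + i + u + 1/2) (m+1) = rr (a + u) (m+1) := by
      rw [ff_eq_rr]
      congr 1
      push_cast
      ring
    have htop : ff ((K+1/2) + ((m:ℚ) + i + u)) u = rr (a + m + K + 1) u := by
      rw [ff_eq_rr]
      congr 1
      push_cast
      ring
    have hmid : ff ((K+1/2) + (i:ℚ)) (m-u) = rr (1 + a + (a+m+K+1) - (a+m+1) - m + u) (m-u) := by
      rw [ff_eq_rr]
      congr 1
      rw [Nat.cast_sub hum]
      push_cast
      ring
    have hsplit : rr a (2*m+1) = rr a u * rr (a + u) (m+1) * rr ((a+m+1) + u) (m-u) := by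
      have hlen : 2*m+1 = u + ((m+1) + (m-u)) := by omega
      rw [hlen, rr_add, rr_add]
      have harg : a + (u:ℚ) + ((m+1 : ℕ) : ℚ) = (a + m + 1) + u := by push_cast; ring
      rw [harg, mul_assoc]
    have h1 : rr (a+u) (m+1) ≠ 0 := ne_of_gt (rr_pos (by positivity) _)
    have h2 : rr a (2*m+1) ≠ 0 := ne_of_gt (rr_pos hapos _)
    have h3 : rr a u ≠ 0 := ne_of_gt (rr_pos hapos _)
    have h4 : rr ((a + (m:ℚ) + 1) + u) (m-u) ≠ 0 := ne_of_gt (rr_pos (by positivity) _)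
    rw [hden, htop, hmid, psT, hsplit]
    field_simp
  rw [Finset.sum_congr rfl hterm, ← Finset.mul_sum, psSum]
  have hdc : a + (m:ℚ) + 1 - (a + m + K + 1) = -K := by ring
  rw [hdc, hK, rr_neg_natCast_eq_zero hk]
  ring

/-- `F2 i m = 2·F̃ᵢᵐ(x,y)` as a polynomial in `ℚ[x,y]`, with `x = X 0`, `y = X 1`. -/
noncomputable def F2 (i m : ℕ) : MvPolynomial (Fin 2) ℚ :=
  ∑ u ∈ Finset.range (m+1),
    C ((m.choose u : ℚ) * (-1)^u * (m.factorial : ℚ) / ff ((m:ℚ) + i + u + 1/2) (m+1))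
      * ff (X 0 + C ((m:ℚ) + i + u)) (2*m+2*i+2*u+1)
      * ff (X 1 + C ((m:ℚ) + i)) (m-u)
      * ff (X 1 - C ((i:ℚ) + u + 1)) (m-u)

noncomputable def sig (m : ℕ) : MvPolynomial (Fin 2) ℚ →ₐ[ℚ] Polynomial ℚ :=
  aeval ![Polynomial.X, Polynomial.C (m:ℚ) - Polynomial.X]

noncomputable def emb : Polynomial ℚ →ₐ[ℚ] MvPolynomial (Fin 2) ℚ :=
  Polynomial.aeval (X 0)

lemma sig_X0 (m : ℕ) : sig m (X 0) = Polynomial.X := by simp [sig]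

lemma sig_X1 (m : ℕ) : sig m (X 1) = Polynomial.C (m:ℚ) - Polynomial.X := by simp [sig]

lemma sig_C (m : ℕ) (q : ℚ) : sig m (C q) = Polynomial.C q := by
  simp [sig, algHom_C, algebraMap_eq]

lemma emb_C (q : ℚ) : emb (Polynomial.C q) = C q := by
  simp [emb]

lemma emb_X : emb Polynomial.X = X 0 := by simp [emb]

lemma mem_span_of_sig_eq_zero (m : ℕ) (p : MvPolynomial (Fin 2) ℚ) (h : sig m p = 0) :
    p ∈ Ideal.span {(X 0 + X 1 - C (m:ℚ) : MvPolynomial (Fin 2) ℚ)} := by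
  have key : ∀ q : MvPolynomial (Fin 2) ℚ,
      q - emb (sig m q) ∈ Ideal.span {(X 0 + X 1 - C (m:ℚ) : MvPolynomial (Fin 2) ℚ)} := by
    intro q
    induction q using MvPolynomial.induction_on with
    | C a =>
      rw [sig_C, emb_C, sub_self]
      exact Ideal.zero_mem _
    | add p q hp hq =>
      have : p + q - emb (sig m (p + q)) = (p - emb (sig m p)) + (q - emb (sig m q)) := by
        rw [map_add, map_add]; ring
      rw [this]
      exact Ideal.add_mem _ hp hq
    | mul_X p n hp =>
      have hx : (X n : MvPolynomial (Fin 2) ℚ) - emb (sig m (X n))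
          ∈ Ideal.span {(X 0 + X 1 - C (m:ℚ) : MvPolynomial (Fin 2) ℚ)} := by
        fin_cases n <;> simp only [Fin.isValue, Fin.zero_eta, Fin.mk_one]
        · rw [show X ((fun i => i) (0 : Fin 2)) = (X 0 : MvPolynomial (Fin 2) ℚ) from rfl,
            sig_X0, emb_X, sub_self]
          exact Ideal.zero_mem _
        · rw [show X ((fun i => i) (1 : Fin 2)) = (X 1 : MvPolynomial (Fin 2) ℚ) from rfl,
            sig_X1, map_sub, emb_C, emb_X]
          have : (X 1 : MvPolynomial (Fin 2) ℚ) - (C (m:ℚ) - X 0)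
              = X 0 + X 1 - C (m:ℚ) := by ring
          rw [this]
          exact Ideal.subset_span (Set.mem_singleton _)
      have expand : p * X n - emb (sig m (p * X n))
          = (p - emb (sig m p)) * X n + emb (sig m p) * (X n - emb (sig m (X n))) := by
        rw [map_mul, map_mul]; ring
      rw [expand]
      exact Ideal.add_mem _ (Ideal.mul_mem_right _ _ hp) (Ideal.mul_mem_left _ _ hx)
  have h2 := key p
  rwa [h, map_zero, sub_zero] at h2

section PolyLemmas

lemma ffX_monic (α : ℚ) (n : ℕ) : (ff (Polynomial.X + Polynomial.C α) n).Monic := by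
  induction n with
  | zero => simpa [ff] using Polynomial.monic_one
  | succ n ih =>
    rw [ff_succ]
    have h : Polynomial.X + Polynomial.C α - ((n : ℕ) : Polynomial ℚ)
        = Polynomial.X + Polynomial.C (α - n) := by
      rw [← Polynomial.C_eq_natCast, add_sub_assoc, ← Polynomial.C_sub]
    rw [h]
    exact ih.mul (Polynomial.monic_X_add_C _)

lemma ffX_natDegree (α : ℚ) (n : ℕ) :
    (ff (Polynomial.X + Polynomial.C α) n).natDegree = n := by
  induction n with
  | zero => simp [ff]
  | succ n ih =>
    rw [ff_succ]
    have h : Polynomial.X + Polynomial.C α - ((n : ℕ) : Polynomial ℚ)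
        = Polynomial.X + Polynomial.C (α - n) := by
      rw [← Polynomial.C_eq_natCast, add_sub_assoc, ← Polynomial.C_sub]
    rw [h, (ffX_monic α n).natDegree_mul (Polynomial.monic_X_add_C _),
      ih, Polynomial.natDegree_X_add_C]

lemma ff_eval (x : ℚ) (p : Polynomial ℚ) (n : ℕ) :
    (ff p n).eval x = ff (p.eval x) n := by
  simpa using ff_map p (Polynomial.evalRingHom x) n

lemma ff_CX (γ : ℚ) (n : ℕ) :
    ff (Polynomial.C γ - Polynomial.X) n
      = (-1)^n * ff (Polynomial.X + Polynomial.C ((n:ℚ) - 1 - γ)) n := by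
  rw [ff_reflect]
  congr 1
  rw [← Polynomial.C_eq_natCast, ← Polynomial.C_1]
  rw [show Polynomial.C ((n:ℚ)) - Polynomial.C (1:ℚ) - (Polynomial.C γ - Polynomial.X)
      = Polynomial.X + (Polynomial.C (n:ℚ) - Polynomial.C 1 - Polynomial.C γ) from by ring]
  rw [← Polynomial.C_sub, ← Polynomial.C_sub]

end PolyLemmas

section Factor

lemma term_fact (i m u : ℕ) (hu : u ≤ m) :
    ff (Polynomial.X + Polynomial.C ((m:ℚ) + i + u)) (2*m+2*i+2*u+1)
      * ff (Polynomial.C (m:ℚ) - Polynomial.X + Polynomial.C ((m:ℚ) + i)) (m-u)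
      * ff (Polynomial.C (m:ℚ) - Polynomial.X - Polynomial.C ((i:ℚ) + u + 1)) (m-u)
    = ff (Polynomial.X + Polynomial.C ((m:ℚ) + i)) (3*m+2*i+1)
      * (ff (Polynomial.X + Polynomial.C ((m:ℚ) + i + u)) u
        * ff (Polynomial.X + Polynomial.C (i:ℚ)) (m-u)) := by
  -- split the big falling factorial
  have hsplit1 : 2*m+2*i+2*u+1 = u + (2*m+2*i+u+1) := by omega
  have e1 : Polynomial.X + Polynomial.C ((m:ℚ) + i + u) - ((u : ℕ) : Polynomial ℚ)
      = Polynomial.X + Polynomial.C ((m:ℚ) + i) := by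
    rw [← Polynomial.C_eq_natCast, add_sub_assoc, ← Polynomial.C_sub]
    congr 2
    ring
  have h1 : ff (Polynomial.X + Polynomial.C ((m:ℚ) + i + u)) (2*m+2*i+2*u+1)
      = ff (Polynomial.X + Polynomial.C ((m:ℚ) + i + u)) u
        * ff (Polynomial.X + Polynomial.C ((m:ℚ) + i)) (2*m+2*i+u+1) := by
    rw [hsplit1, ff_add, e1]
  -- second factor: reflect
  have e2 : Polynomial.C (m:ℚ) - Polynomial.X + Polynomial.C ((m:ℚ) + i)
      = Polynomial.C (2*(m:ℚ) + i) - Polynomial.X := by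
    rw [show Polynomial.C (m:ℚ) - Polynomial.X + Polynomial.C ((m:ℚ) + i)
        = (Polynomial.C (m:ℚ) + Polynomial.C ((m:ℚ) + i)) - Polynomial.X from by ring,
      ← Polynomial.C_add]
    congr 2
    ring
  have h2 : ff (Polynomial.C (m:ℚ) - Polynomial.X + Polynomial.C ((m:ℚ) + i)) (m-u)
      = (-1)^(m-u) * ff (Polynomial.X + Polynomial.C (((m-u:ℕ):ℚ) - 1 - (2*(m:ℚ)+i))) (m-u) := by
    rw [e2, ff_CX]
  -- third factor: reflect
  have e3 : Polynomial.C (m:ℚ) - Polynomial.X - Polynomial.C ((i:ℚ) + u + 1)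
      = Polynomial.C ((m:ℚ) - i - u - 1) - Polynomial.X := by
    rw [show Polynomial.C (m:ℚ) - Polynomial.X - Polynomial.C ((i:ℚ) + u + 1)
        = (Polynomial.C (m:ℚ) - Polynomial.C ((i:ℚ) + u + 1)) - Polynomial.X from by ring,
      ← Polynomial.C_sub]
    congr 2
    ring
  have h3 : ff (Polynomial.C (m:ℚ) - Polynomial.X - Polynomial.C ((i:ℚ) + u + 1)) (m-u)
      = (-1)^(m-u) * ff (Polynomial.X + Polynomial.C (i:ℚ)) (m-u) := by
    rw [e3, ff_CX]
    congr 3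
    rw [Nat.cast_sub hu]
    ring
  -- target split
  have hsplit2 : 3*m+2*i+1 = (2*m+2*i+u+1) + (m-u) := by omega
  have e4 : Polynomial.X + Polynomial.C ((m:ℚ) + i) - (((2*m+2*i+u+1) : ℕ) : Polynomial ℚ)
      = Polynomial.X + Polynomial.C (((m-u:ℕ):ℚ) - 1 - (2*(m:ℚ)+i)) := by
    rw [← Polynomial.C_eq_natCast, add_sub_assoc, ← Polynomial.C_sub]
    congr 2
    rw [Nat.cast_sub hu]
    push_cast
    ring
  have h4 : ff (Polynomial.X + Polynomial.C ((m:ℚ) + i)) (3*m+2*i+1)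
      = ff (Polynomial.X + Polynomial.C ((m:ℚ) + i)) (2*m+2*i+u+1)
        * ff (Polynomial.X + Polynomial.C (((m-u:ℕ):ℚ) - 1 - (2*(m:ℚ)+i))) (m-u) := by
    rw [hsplit2, ff_add, e4]
  rw [h1, h2, h3, h4]
  have hs : ((-1:Polynomial ℚ))^(m-u) * (-1:Polynomial ℚ)^(m-u) = 1 := by
    rw [← pow_add, Even.neg_one_pow ⟨m-u, by ring⟩]
  linear_combination (ff (Polynomial.X + Polynomial.C ((m:ℚ) + i + u)) u
    * ff (Polynomial.X + Polynomial.C (((m-u:ℕ):ℚ) - 1 - (2*(m:ℚ)+i))) (m-u)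
    * ff (Polynomial.X + Polynomial.C (i:ℚ)) (m-u)
    * ff (Polynomial.X + Polynomial.C ((m:ℚ) + i)) (2*m+2*i+u+1)) * hs

end Factor

noncomputable def cq (i m u : ℕ) : ℚ :=
  (m.choose u : ℚ) * (-1)^u * (m.factorial : ℚ) / ff ((m:ℚ) + i + u + 1/2) (m+1)

noncomputable def Gp (i m : ℕ) : Polynomial ℚ :=
  ∑ u ∈ Finset.range (m+1), Polynomial.C (cq i m u) *
    (ff (Polynomial.X + Polynomial.C ((m:ℚ) + i + u)) u
      * ff (Polynomial.X + Polynomial.C (i:ℚ)) (m-u))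

lemma sig_F2_eq (i m : ℕ) : sig m (F2 i m)
    = ff (Polynomial.X + Polynomial.C ((m:ℚ) + i)) (3*m+2*i+1) * Gp i m := by
  rw [F2, map_sum, Gp, Finset.mul_sum]
  apply Finset.sum_congr rfl
  intro u hu
  have hum : u ≤ m := by have := Finset.mem_range.1 hu; omega
  rw [map_mul (sig m), map_mul (sig m), map_mul (sig m), sig_C]
  rw [ff_map _ (sig m), ff_map _ (sig m), ff_map _ (sig m)]
  rw [map_add (sig m), map_add (sig m), map_sub (sig m), sig_X0, sig_X1, sig_C, sig_C, sig_C]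
  have hf := term_fact i m u hum
  rw [show ((m.choose u : ℚ) * (-1)^u * (m.factorial : ℚ) / ff ((m:ℚ) + i + u + 1/2) (m+1))
      = cq i m u from rfl]
  linear_combination Polynomial.C (cq i m u) * hf

lemma Wform : Polynomial.X - Polynomial.C (1/2 : ℚ)
    = Polynomial.X + Polynomial.C (-(1/2) : ℚ) := by
  rw [sub_eq_add_neg, ← Polynomial.C_neg]

lemma W_monic (m : ℕ) : (ff (Polynomial.X - Polynomial.C (1/2 : ℚ)) m).Monic := by
  rw [Wform]; exact ffX_monic _ m

lemma W_natDegree (m : ℕ) : (ff (Polynomial.X - Polynomial.C (1/2 : ℚ)) m).natDegree = m := by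
  rw [Wform]; exact ffX_natDegree _ m

lemma Gp_eq (i m : ℕ) :
    Gp i m = Polynomial.C (∑ u ∈ Finset.range (m+1), cq i m u)
      * ff (Polynomial.X - Polynomial.C (1/2 : ℚ)) m := by
  rcases Nat.eq_zero_or_pos m with hm | hm
  · subst hm
    simp [Gp, ff_zero, Finset.sum_range_one]
  set B : ℚ := ∑ u ∈ Finset.range (m+1), cq i m u with hB
  -- monic products of degree m
  have hMdeg : ∀ u : ℕ, u ≤ m →
      (ff (Polynomial.X + Polynomial.C ((m:ℚ) + i + u)) u
        * ff (Polynomial.X + Polynomial.C (i:ℚ)) (m-u)).natDegree = m := by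
    intro u hu
    rw [(ffX_monic _ u).natDegree_mul (ffX_monic _ (m-u)), ffX_natDegree, ffX_natDegree]
    omega
  have hMmonic : ∀ u : ℕ, ((ff (Polynomial.X + Polynomial.C ((m:ℚ) + i + u)) u
        * ff (Polynomial.X + Polynomial.C (i:ℚ)) (m-u))).Monic :=
    fun u => (ffX_monic _ u).mul (ffX_monic _ (m-u))
  have hGdeg : (Gp i m).natDegree ≤ m := by
    apply Polynomial.natDegree_sum_le_of_forall_le
    intro u hu
    have hum : u ≤ m := by have := Finset.mem_range.1 hu; omega
    exact le_trans (Polynomial.natDegree_C_mul_le _ _) (le_of_eq (hMdeg u hum))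
  have hGcoeff : (Gp i m).coeff m = B := by
    rw [Gp, Polynomial.finset_sum_coeff, hB]
    apply Finset.sum_congr rfl
    intro u hu
    have hum : u ≤ m := by have := Finset.mem_range.1 hu; omega
    rw [Polynomial.coeff_C_mul]
    have h1 := (hMmonic u).coeff_natDegree
    rw [hMdeg u hum] at h1
    rw [h1, mul_one]
  have hWdeg := W_natDegree m
  have hWmonic := W_monic m
  set W := ff (Polynomial.X - Polynomial.C (1/2 : ℚ)) m with hWdef
  set H := Gp i m - Polynomial.C B * W with hH
  have hHcoeff : H.coeff m = 0 := by
    rw [hH, Polynomial.coeff_sub, hGcoeff, Polynomial.coeff_C_mul]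
    have h1 := hWmonic.coeff_natDegree
    rw [hWdeg] at h1
    rw [h1, mul_one, sub_self]
  have hHdeg : H.natDegree ≤ m := by
    refine le_trans (Polynomial.natDegree_sub_le _ _) (max_le hGdeg ?_)
    exact le_trans (Polynomial.natDegree_C_mul_le _ _) (le_of_eq hWdeg)
  have hHeval : ∀ k : ℕ, k < m → H.eval ((k:ℚ) + 1/2) = 0 := by
    intro k hk
    rw [hH, Polynomial.eval_sub, Polynomial.eval_mul, Polynomial.eval_C]
    have hWeval : W.eval ((k:ℚ) + 1/2) = 0 := by
      rw [hWdef, ff_eval, Polynomial.eval_sub, Polynomial.eval_X, Polynomial.eval_C]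
      rw [show ((k:ℚ) + 1/2 - 1/2) = (k:ℚ) from by ring]
      exact ff_natCast_eq_zero hk
    rw [hWeval, mul_zero, sub_zero, Gp, Polynomial.eval_finset_sum]
    have := keyVanish i m k hk
    rw [← this]
    apply Finset.sum_congr rfl
    intro u hu
    rw [Polynomial.eval_mul, Polynomial.eval_C, Polynomial.eval_mul, ff_eval, ff_eval]
    rw [Polynomial.eval_add, Polynomial.eval_add, Polynomial.eval_X, Polynomial.eval_C,
      Polynomial.eval_C]
    rfl
  have hH0 : H = 0 := by
    by_contra hne
    have hdlt : H.natDegree < m := by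
      rcases lt_or_eq_of_le hHdeg with h | h
      · exact h
      · exfalso
        have := Polynomial.leadingCoeff_ne_zero.mpr hne
        rw [Polynomial.leadingCoeff, h] at this
        exact this hHcoeff
    have hinj : Function.Injective (fun k : ℕ => (k:ℚ) + 1/2) := by
      intro a b hab
      have : (a:ℚ) = (b:ℚ) := by
        simpa using congrArg (fun x => x - (1/2:ℚ)) hab
      exact_mod_cast this
    apply hne
    apply Polynomial.eq_zero_of_natDegree_lt_card_of_eval_eq_zero' H
      ((Finset.range m).image (fun k : ℕ => (k:ℚ) + 1/2))
    · intro r hr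
      obtain ⟨k, hk, rfl⟩ := Finset.mem_image.1 hr
      exact hHeval k (Finset.mem_range.1 hk)
    · rwa [Finset.card_image_of_injective _ hinj, Finset.card_range]
  rw [hH] at hH0
  exact sub_eq_zero.mp hH0

theorem stmt9 (i m : ℕ) :
    ∃ B : ℚ,
      F2 i m - C B * ff (X 0 + C ((m:ℚ) + i)) (3*m+2*i+1) * ff (X 0 - C (1/2 : ℚ)) m
          ∈ Ideal.span {X 0 + X 1 - C (m:ℚ)} ∧
      F2 i m + C B * ff (X 1 + C ((m:ℚ) + i)) (3*m+2*i+1) * ff (X 1 - C (1/2 : ℚ)) m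
          ∈ Ideal.span {(X 0 + X 1 - C (m:ℚ) : MvPolynomial (Fin 2) ℚ)} := by
  refine ⟨∑ u ∈ Finset.range (m+1), cq i m u, ?_, ?_⟩
  · apply mem_span_of_sig_eq_zero
    rw [map_sub (sig m), map_mul (sig m), map_mul (sig m), sig_F2_eq, sig_C,
      ff_map _ (sig m), ff_map _ (sig m), map_add (sig m), map_sub (sig m),
      sig_X0, sig_C, sig_C, Gp_eq]
    ring
  · apply mem_span_of_sig_eq_zero
    rw [map_add (sig m), map_mul (sig m), map_mul (sig m), sig_F2_eq, sig_C,
      ff_map _ (sig m), ff_map _ (sig m), map_add (sig m), map_sub (sig m),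
      sig_X1, sig_C, sig_C, Gp_eq]
    have R1 : ff (Polynomial.C (m:ℚ) - Polynomial.X + Polynomial.C ((m:ℚ) + i)) (3*m+2*i+1)
        = (-1)^(3*m+2*i+1) * ff (Polynomial.X + Polynomial.C ((m:ℚ) + i)) (3*m+2*i+1) := by
      rw [show Polynomial.C (m:ℚ) - Polynomial.X + Polynomial.C ((m:ℚ) + i)
          = (Polynomial.C (m:ℚ) + Polynomial.C ((m:ℚ) + i)) - Polynomial.X from by ring,
        ← Polynomial.C_add, ff_CX]
      congr 3
      push_cast
      ring
    have R2 : ff (Polynomial.C (m:ℚ) - Polynomial.X - Polynomial.C (1/2 : ℚ)) m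
        = (-1)^m * ff (Polynomial.X - Polynomial.C (1/2 : ℚ)) m := by
      rw [show Polynomial.C (m:ℚ) - Polynomial.X - Polynomial.C (1/2 : ℚ)
          = (Polynomial.C (m:ℚ) - Polynomial.C (1/2 : ℚ)) - Polynomial.X from by ring,
        ← Polynomial.C_sub, ff_CX, Wform]
      congr 3
      push_cast
      ring
    rw [R1, R2]
    have hsign : ((-1:Polynomial ℚ))^(3*m+2*i+1) * (-1:Polynomial ℚ)^m = -1 := by
      rw [← pow_add, show 3*m+2*i+1+m = 2*(2*m+i)+1 from by omega, pow_succ, pow_mul]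
      norm_num
    linear_combination (Polynomial.C (∑ u ∈ Finset.range (m+1), cq i m u)
      * ff (Polynomial.X + Polynomial.C ((m:ℚ) + i)) (3*m+2*i+1)
      * ff (Polynomial.X - Polynomial.C (1/2 : ℚ)) m) * hsign
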